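/- For every operator system S ⊆ M_n, the quantum complexity satisfies γ(S) ≤ 2n². -/

import Mathlib

open Matrix
open scoped ComplexOrder

/-- A tuple of Kraus operators for a quantum channel `M_ι → M_k`:
`r` matrices of size `k × ι` with `∑ Aᵢᴴ Aᵢ = I`. -/
noncomputable def IsKraus {ι : Type*} [Fintype ι] [DecidableEq ι] {k r : ℕ}
    (A : Fin r → Matrix (Fin k) ι ℂ) : Prop :=
  ∑ i, (A i)ᴴ * A i = 1

/-- The non-commutative confusability graph `S_Φ = span{Aᵢᴴ Aⱼ}` of a channel
given by Kraus operators. -/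
noncomputable def confGraph {ι : Type*} [Fintype ι] {k r : ℕ}
    (A : Fin r → Matrix (Fin k) ι ℂ) : Submodule ℂ (Matrix ι ι ℂ) :=
  Submodule.span ℂ {B | ∃ i j, B = (A i)ᴴ * A j}

/-- An operator system in `M_ι`: a subspace containing `I` and closed under `ᴴ`. -/
def IsOperatorSystem {ι : Type*} [Fintype ι] [DecidableEq ι]
    (S : Submodule ℂ (Matrix ι ι ℂ)) : Prop :=
  (1 : Matrix ι ι ℂ) ∈ S ∧ ∀ A ∈ S, Aᴴ ∈ S

/-- Quantum complexity `γ(S)`: the least `k` such that `S = S_Φ` for some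
quantum channel `Φ : M_ι → M_k`. -/
noncomputable def gammaOS {ι : Type*} [Fintype ι] [DecidableEq ι]
    (S : Submodule ℂ (Matrix ι ι ℂ)) : ℕ :=
  sInf {k | ∃ r : ℕ, ∃ A : Fin r → Matrix (Fin k) ι ℂ, IsKraus A ∧ confGraph A = S}

namespace GammaAux

variable {n : ℕ} (S : Submodule ℂ (Matrix (Fin n) (Fin n) ℂ))

/-- A spanning family for `S` indexed by `Fin n × Fin n` (padded with `1`). -/
noncomputable def BB (i j : Fin n) : Matrix (Fin n) (Fin n) ℂ :=
  if h : (finProdFinEquiv (i, j) : ℕ) < Module.finrank ℂ ↥S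
  then ((Module.finBasis ℂ ↥S) ⟨_, h⟩ : ↥S) else 1

lemma BB_mem (hS : IsOperatorSystem S) (i j : Fin n) : BB S i j ∈ S := by
  unfold BB
  split
  · exact Submodule.coe_mem _
  · exact hS.1

lemma BB_eq_of (i j : Fin n) (t : Fin (Module.finrank ℂ ↥S))
    (h : (finProdFinEquiv (i, j) : ℕ) = (t : ℕ)) :
    BB S i j = ((Module.finBasis ℂ ↥S) t : Matrix (Fin n) (Fin n) ℂ) := by
  have hlt : (finProdFinEquiv (i, j) : ℕ) < Module.finrank ℂ ↥S := h ▸ t.2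
  unfold BB
  rw [dif_pos hlt]
  have : (⟨(finProdFinEquiv (i, j) : ℕ), hlt⟩ : Fin (Module.finrank ℂ ↥S)) = t :=
    Fin.ext h
  rw [this]

/-- The block payload. -/
noncomputable def KB (w w' : Fin 2 × Fin n) : Matrix (Fin n) (Fin n) ℂ :=
  if w.1 = 0 then (if w'.1 = 0 then 0 else BB S w.2 w'.2)
  else (if w'.1 = 0 then (BB S w'.2 w.2)ᴴ else 0)

lemma KB_herm (w w' : Fin 2 × Fin n) : (KB S w w')ᴴ = KB S w' w := by
  unfold KB
  by_cases h1 : w.1 = 0 <;> by_cases h2 : w'.1 = 0 <;> simp [h1, h2]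

lemma KB_diag (w : Fin 2 × Fin n) : KB S w w = 0 := by
  unfold KB; by_cases h : w.1 = 0 <;> simp [h]

lemma KB_mem (hS : IsOperatorSystem S) (w w' : Fin 2 × Fin n) : KB S w w' ∈ S := by
  unfold KB
  split_ifs <;>
    first
      | exact S.zero_mem
      | exact BB_mem S hS _ _
      | exact hS.2 _ (BB_mem S hS _ _)

noncomputable def KK :
    Matrix ((Fin 2 × Fin n) × Fin n) ((Fin 2 × Fin n) × Fin n) ℂ :=
  Matrix.of fun x y => KB S x.1 y.1 x.2 y.2

lemma KK_herm : (KK S).IsHermitian := by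
  show (KK S)ᴴ = KK S
  ext x y
  calc (KK S)ᴴ x y = star (KB S y.1 x.1 y.2 x.2) := rfl
    _ = (KB S y.1 x.1)ᴴ x.2 y.2 := rfl
    _ = KB S x.1 y.1 x.2 y.2 := by rw [KB_herm]
    _ = KK S x y := rfl

noncomputable def TT : ℝ := ∑ x, ∑ y, ‖KK S x y‖

noncomputable def ccc (n : ℕ) : ℝ := ((2 * n : ℕ) : ℝ)⁻¹

noncomputable def eee : ℝ := ccc n / (TT S + 1)

lemma TT_nonneg : 0 ≤ TT S :=
  Finset.sum_nonneg fun x _ => Finset.sum_nonneg fun y _ => norm_nonneg _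

lemma ccc_nonneg (n : ℕ) : 0 ≤ ccc n := inv_nonneg.2 (Nat.cast_nonneg _)

lemma eee_nonneg : 0 ≤ eee S := by
  have := TT_nonneg S
  have := ccc_nonneg n
  unfold eee
  positivity

lemma eee_mul : eee S * (TT S + 1) = ccc n := by
  have h : TT S + 1 ≠ 0 := by have := TT_nonneg S; linarith
  rw [eee, div_mul_cancel₀ _ h]

lemma ccc_pos (hn : 0 < n) : 0 < ccc n := by
  unfold ccc
  have : (0 : ℝ) < ((2 * n : ℕ) : ℝ) := by
    have : 0 < 2 * n := by omega
    exact_mod_cast this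
  positivity

lemma eee_pos (hn : 0 < n) : 0 < eee S := by
  have h1 := ccc_pos hn
  have h2 := TT_nonneg S
  unfold eee
  positivity

noncomputable def GG :
    Matrix ((Fin 2 × Fin n) × Fin n) ((Fin 2 × Fin n) × Fin n) ℂ :=
  ((ccc n : ℝ) : ℂ) • 1 + ((eee S : ℝ) : ℂ) • KK S

lemma GG_psd : (GG S).PosSemidef := by
  unfold GG
  set K := KK S with hKdef
  have hK : K.IsHermitian := KK_herm S
  set c := ccc n with hcdef
  set e := eee S with hedef
  have hc : 0 ≤ c := ccc_nonneg n
  have he : 0 ≤ e := eee_nonneg S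
  have hbound : e * (TT S + 1) = c := eee_mul S
  set T : ℝ := TT S with hT
  have hTsum : T = ∑ x, ∑ y, ‖K x y‖ := rfl
  have hT0 : 0 ≤ T := TT_nonneg S
  have hGh : ((c : ℂ) • 1 + (e : ℂ) • K).IsHermitian := by
    show _ᴴ = _
    rw [conjTranspose_add, conjTranspose_smul, conjTranspose_smul, conjTranspose_one, hK.eq]
    simp
  refine PosSemidef.of_dotProduct_mulVec_nonneg hGh fun x => ?_
  set G := (c : ℂ) • 1 + (e : ℂ) • K with hG
  set s := star x ⬝ᵥ G *ᵥ x with hs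
  have hsreal : (starRingEnd ℂ) s = s := by
    have h1 : star s = star (G *ᵥ x) ⬝ᵥ x := by
      rw [hs]; rw [star_dotProduct]; simp
    have h2 : star (G *ᵥ x) ⬝ᵥ x = (star x ᵥ* Gᴴ) ⬝ᵥ x := by rw [star_mulVec]
    have h3 : (star x ᵥ* Gᴴ) ⬝ᵥ x = star x ⬝ᵥ G *ᵥ x := by
      rw [hGh.eq, ← dotProduct_mulVec]
    calc (starRingEnd ℂ) s = star s := rfl
      _ = s := by rw [h1, h2, h3, hs]
  obtain ⟨r, hr⟩ : ∃ r : ℝ, s = (r : ℂ) := Complex.conj_eq_iff_real.1 hsreal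
  rw [hr, Complex.zero_le_real]
  set P : ℝ := ∑ i, Complex.normSq (x i) with hP
  have hP0 : 0 ≤ P := Finset.sum_nonneg fun i _ => Complex.normSq_nonneg _
  have hPc : star x ⬝ᵥ x = (P : ℂ) := by
    simp only [dotProduct, Pi.star_apply, hP]
    push_cast
    congr 1; ext i
    rw [Complex.star_def, mul_comm, Complex.mul_conj]
  set t := star x ⬝ᵥ K *ᵥ x with ht
  have hsplit : s = (c : ℂ) * (P : ℂ) + (e : ℂ) * t := by
    rw [hs, hG, add_mulVec, smul_mulVec, smul_mulVec, one_mulVec,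
      dotProduct_add, dotProduct_smul, dotProduct_smul, hPc, smul_eq_mul, smul_eq_mul, ht]
  have hterm : ∀ y z, ‖star (x y) * (K y z * x z)‖ ≤ ‖K y z‖ * P := by
    intro y z
    have hy : ‖x y‖ ^ 2 ≤ P := by
      rw [Complex.sq_norm]
      exact Finset.single_le_sum (f := fun i => Complex.normSq (x i))
        (fun i _ => Complex.normSq_nonneg _) (Finset.mem_univ y)
    have hz : ‖x z‖ ^ 2 ≤ P := by
      rw [Complex.sq_norm]
      exact Finset.single_le_sum (f := fun i => Complex.normSq (x i))
        (fun i _ => Complex.normSq_nonneg _) (Finset.mem_univ z)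
    have hyz : ‖x y‖ * ‖x z‖ ≤ P := by
      nlinarith [sq_nonneg (‖x y‖ - ‖x z‖),
        norm_nonneg (x y), norm_nonneg (x z)]
    have heq : ‖star (x y) * (K y z * x z)‖
        = ‖K y z‖ * (‖x y‖ * ‖x z‖) := by
      simp only [norm_mul, Complex.star_def, Complex.norm_conj]; ring
    rw [heq]
    exact mul_le_mul_of_nonneg_left hyz (norm_nonneg _)
  have habs : ‖t‖ ≤ T * P := by
    have h1 : t = ∑ y, ∑ z, star (x y) * (K y z * x z) := by
      simp only [ht, dotProduct, mulVec, dotProduct, Pi.star_apply, Finset.mul_sum]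
    rw [h1]
    calc ‖∑ y, ∑ z, star (x y) * (K y z * x z)‖
        ≤ ∑ y, ‖∑ z, star (x y) * (K y z * x z)‖ := norm_sum_le _ _
      _ ≤ ∑ y, ∑ z, ‖star (x y) * (K y z * x z)‖ :=
          Finset.sum_le_sum fun y _ => norm_sum_le _ _
      _ ≤ ∑ y, ∑ z, ‖K y z‖ * P :=
          Finset.sum_le_sum fun y _ => Finset.sum_le_sum fun z _ => hterm y z
      _ = T * P := by rw [hTsum, Finset.sum_mul]; congr 1; ext y; rw [Finset.sum_mul]
  have hre : r = c * P + e * t.re := by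
    have := congrArg Complex.re (hr.symm.trans hsplit)
    simpa using this
  have htre : -(T * P) ≤ t.re := by
    have h1 : |t.re| ≤ ‖t‖ := Complex.abs_re_le_norm t
    have := neg_abs_le t.re
    linarith
  rw [hre]
  nlinarith [mul_le_mul_of_nonneg_left htre he]

open scoped MatrixOrder in
noncomputable def RR :
    Matrix ((Fin 2 × Fin n) × Fin n) ((Fin 2 × Fin n) × Fin n) ℂ :=
  CFC.sqrt (GG S)

noncomputable def eE (n : ℕ) : ((Fin 2 × Fin n) × Fin n) ≃ Fin (2 * n ^ 2) :=
  (Equiv.prodCongr finProdFinEquiv (Equiv.refl (Fin n))).trans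
    (finProdFinEquiv.trans (finCongr (by ring)))

/-- The Kraus operators. -/
noncomputable def AA : Fin (2 * n) → Matrix (Fin (2 * n ^ 2)) (Fin n) ℂ :=
  fun u => Matrix.of fun x p => RR S ((eE n).symm x) (finProdFinEquiv.symm u, p)

open scoped MatrixOrder in
lemma AA_mul (u v : Fin (2 * n)) :
    (AA S u)ᴴ * AA S v = Matrix.of (fun p q =>
      GG S (finProdFinEquiv.symm u, p) (finProdFinEquiv.symm v, q)) := by
  have hR2 : RR S * RR S = GG S := CFC.sqrt_mul_sqrt_self _ (GG_psd S).nonneg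
  have hRh : (RR S)ᴴ = RR S := (CFC.sqrt_nonneg (GG S)).posSemidef.1
  ext p q
  simp only [Matrix.mul_apply, conjTranspose_apply, Matrix.of_apply, AA]
  rw [Equiv.sum_comp (eE n).symm
    (fun y => star (RR S y (finProdFinEquiv.symm u, p)) * RR S y (finProdFinEquiv.symm v, q))]
  calc ∑ y, star (RR S y (finProdFinEquiv.symm u, p)) * RR S y (finProdFinEquiv.symm v, q)
      = ∑ y, (RR S)ᴴ (finProdFinEquiv.symm u, p) y * RR S y (finProdFinEquiv.symm v, q) := by
        simp [conjTranspose_apply]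
    _ = ((RR S)ᴴ * RR S) (finProdFinEquiv.symm u, p) (finProdFinEquiv.symm v, q) := by
        rw [Matrix.mul_apply]
    _ = GG S (finProdFinEquiv.symm u, p) (finProdFinEquiv.symm v, q) := by rw [hRh, hR2]

lemma Gblk_eq (w w' : Fin 2 × Fin n) :
    Matrix.of (fun p q => GG S (w, p) (w', q)) =
    (if w = w' then ((ccc n : ℝ) : ℂ) • (1 : Matrix (Fin n) (Fin n) ℂ) else 0)
      + ((eee S : ℝ) : ℂ) • KB S w w' := by
  ext p q
  by_cases h : w = w'
  · subst h
    simp [GG, KK, Matrix.one_apply, Prod.ext_iff]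
  · simp [GG, KK, Matrix.one_apply, Prod.ext_iff, h]

lemma Gblk_mem (hS : IsOperatorSystem S) (w w' : Fin 2 × Fin n) :
    Matrix.of (fun p q => GG S (w, p) (w', q)) ∈ S := by
  rw [Gblk_eq]
  refine S.add_mem ?_ (S.smul_mem _ (KB_mem S hS w w'))
  split
  · exact S.smul_mem _ hS.1
  · exact S.zero_mem

lemma AA_kraus (hn : 0 < n) : IsKraus (AA S) := by
  unfold IsKraus
  have h2n : ((2 * n : ℕ) : ℂ) ≠ 0 := by
    have h : (2 * n : ℕ) ≠ 0 := by omega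
    exact Nat.cast_ne_zero.mpr h
  ext p q
  rw [Matrix.sum_apply]
  have hterm : ∀ u : Fin (2 * n), ((AA S u)ᴴ * AA S u) p q
      = ((ccc n : ℝ) : ℂ) * (if p = q then 1 else 0) := by
    intro u
    rw [AA_mul]
    set w := finProdFinEquiv.symm u
    show (Matrix.of (fun p q => GG S (w, p) (w, q))) p q = _
    rw [Gblk_eq]
    simp [KB_diag, Matrix.one_apply]
  simp only [hterm]
  rw [Finset.sum_const, Finset.card_univ, Fintype.card_fin, nsmul_eq_mul]
  have : ((2 * n : ℕ) : ℂ) * (((ccc n : ℝ) : ℂ) * (if p = q then 1 else 0))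
      = (((2 * n : ℕ) : ℂ) * ((ccc n : ℝ) : ℂ)) * (if p = q then 1 else 0) := by ring
  rw [this]
  have hcc : ((2 * n : ℕ) : ℂ) * ((ccc n : ℝ) : ℂ) = 1 := by
    unfold ccc
    push_cast
    rw [mul_inv_cancel₀]
    push_cast at h2n ⊢
    exact h2n
  rw [hcc, one_mul, Matrix.one_apply]

set_option maxHeartbeats 1000000 in
lemma AA_conf (hS : IsOperatorSystem S) (hn : 0 < n) : confGraph (AA S) = S := by
  unfold confGraph
  apply le_antisymm
  · rw [Submodule.span_le]
    rintro M ⟨i, j, rfl⟩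
    rw [AA_mul]
    exact Gblk_mem S hS _ _
  · -- S ≤ span
    have hbs : Submodule.span ℂ
        ((S.subtype : ↥S →ₗ[ℂ] Matrix (Fin n) (Fin n) ℂ) ''
          Set.range (Module.finBasis ℂ ↥S)) = S := by
      rw [← Submodule.map_span, Module.Basis.span_eq, Submodule.map_subtype_top]
    conv_lhs => rw [← hbs]
    rw [Submodule.span_le]
    rintro M ⟨y, ⟨t, rfl⟩, rfl⟩
    -- show ↑(finBasis t) ∈ span
    have hd : Module.finrank ℂ ↥S ≤ n * n := by
      have h1 := S.finrank_le
      have h2 : Module.finrank ℂ (Matrix (Fin n) (Fin n) ℂ) = n * n := by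
        rw [Module.finrank_matrix]
        simp
      rwa [h2] at h1
    have hlt : (t : ℕ) < n * n := lt_of_lt_of_le t.2 hd
    set st := finProdFinEquiv.symm (⟨(t : ℕ), hlt⟩ : Fin (n * n)) with hst
    have hBB : BB S st.1 st.2 = ((Module.finBasis ℂ ↥S) t : Matrix (Fin n) (Fin n) ℂ) := by
      apply BB_eq_of
      have : (st.1, st.2) = st := rfl
      rw [this, hst, Equiv.apply_symm_apply]
    set u0 := finProdFinEquiv ((0 : Fin 2), st.1) with hu0
    set v0 := finProdFinEquiv ((1 : Fin 2), st.2) with hv0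
    have hmem : (AA S u0)ᴴ * AA S v0 ∈
        Submodule.span ℂ {B | ∃ i j, B = (AA S i)ᴴ * AA S j} :=
      Submodule.subset_span ⟨u0, v0, rfl⟩
    have hval : (AA S u0)ᴴ * AA S v0 = ((eee S : ℝ) : ℂ) • BB S st.1 st.2 := by
      rw [AA_mul, hu0, hv0, Equiv.symm_apply_apply, Equiv.symm_apply_apply, Gblk_eq]
      have h01 : (0 : Fin 2) ≠ 1 := by decide
      have hne : ((0 : Fin 2), st.1) ≠ ((1 : Fin 2), st.2) := by
        intro h
        exact h01 (congrArg Prod.fst h)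
      rw [if_neg hne]
      have hKB : KB S ((0 : Fin 2), st.1) ((1 : Fin 2), st.2) = BB S st.1 st.2 := by
        unfold KB
        have h10 : ¬(1 : Fin 2) = 0 := by decide
        rw [if_pos rfl, if_neg (show ¬((1 : Fin 2), st.2).1 = 0 from h10)]
      rw [hKB, zero_add]
    have hepos := eee_pos S hn
    have hne : ((eee S : ℝ) : ℂ) ≠ 0 := by
      exact_mod_cast Complex.ofReal_ne_zero.mpr (ne_of_gt hepos)
    have : ((Module.finBasis ℂ ↥S) t : Matrix (Fin n) (Fin n) ℂ)
        = ((eee S : ℝ) : ℂ)⁻¹ • ((AA S u0)ᴴ * AA S v0) := by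
      rw [hval, smul_smul, inv_mul_cancel₀ hne, one_smul, hBB]
    rw [Submodule.subtype_apply, this]
    exact Submodule.smul_mem _ _ hmem

end GammaAux


/-- for every operator system `S ⊆ M_n`, `γ(S) ≤ 2n²`. -/
theorem gamma_le (n : ℕ) (S : Submodule ℂ (Matrix (Fin n) (Fin n) ℂ))
    (hS : IsOperatorSystem S) :
    gammaOS S ≤ 2 * n ^ 2 ∧
    ∃ k ≤ 2 * n ^ 2, ∃ r : ℕ, ∃ A : Fin r → Matrix (Fin k) (Fin n) ℂ,
      IsKraus A ∧ confGraph A = S := by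
  rcases Nat.eq_zero_or_pos n with hn | hn
  · subst hn
    have hk : IsKraus (fun _ : Fin 0 => (0 : Matrix (Fin (2 * 0 ^ 2)) (Fin 0) ℂ)) := by
      unfold IsKraus
      ext i j
      exact i.elim0
    have hc : confGraph (fun _ : Fin 0 => (0 : Matrix (Fin (2 * 0 ^ 2)) (Fin 0) ℂ)) = S := by
      apply Submodule.ext
      intro x
      have hx : x = 0 := by ext i j; exact i.elim0
      subst hx
      simp
    have hmem : (2 * 0 ^ 2) ∈ {k | ∃ r : ℕ, ∃ A : Fin r → Matrix (Fin k) (Fin 0) ℂ,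
        IsKraus A ∧ confGraph A = S} :=
      ⟨0, fun _ => (0 : Matrix (Fin (2 * 0 ^ 2)) (Fin 0) ℂ), hk, hc⟩
    exact ⟨Nat.sInf_le hmem, 2 * 0 ^ 2, le_refl _, 0,
      fun _ => (0 : Matrix (Fin (2 * 0 ^ 2)) (Fin 0) ℂ), hk, hc⟩
  · have hk := GammaAux.AA_kraus S hn
    have hc := GammaAux.AA_conf S hS hn
    have hmem : (2 * n ^ 2) ∈ {k | ∃ r : ℕ, ∃ A : Fin r → Matrix (Fin k) (Fin n) ℂ,
        IsKraus A ∧ confGraph A = S} := ⟨2 * n, GammaAux.AA S, hk, hc⟩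
    exact ⟨Nat.sInf_le hmem, 2 * n ^ 2, le_refl _, 2 * n, GammaAux.AA S, hk, hc⟩
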